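/- Let G be a countable, connected, locally finite simple graph that has exactly one end. Then in any network (G,r,p,q,I) on G, every flow of intensity I from p to q is cut-respecting: for every set X of vertices with p,q ∈ X such that only finitely many edges join X to V∖X, one has ∑_{xy∈E, x∈X, y∉X} f(x,y) = 0. -/

import Mathlib

open scoped ENNReal Classical

/-- `f` is a flow of intensity `I` from `p` to `q` in the graph `G`:
it is antisymmetric, vanishes on non-adjacent pairs, and satisfies
Kirchhoff's node law at every vertex (the family of values on edges leaving a
vertex is summable, with sum `I` at `p`, `-I` at `q` and `0` elsewhere). -/
def IsFlow {V : Type} (G : SimpleGraph V) (p q : V) (I : ℝ) (f : V → V → ℝ) : Prop :=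
  (∀ x y, f x y = - f y x) ∧
  (∀ x y, ¬ G.Adj x y → f x y = 0) ∧
  ∀ x : V, HasSum (fun y : G.neighborSet x => f x y)
    (if x = p then I else if x = q then -I else 0)

/-- The energy `W(f) = ∑_{xy ∈ E} f(x,y)² r(xy)`; each edge of `G` corresponds to
exactly two ordered adjacent pairs contributing the same amount, whence the
division by 2. Valued in `ℝ≥0∞`. -/
noncomputable def energy {V : Type} (G : SimpleGraph V) (r : Sym2 V → ℝ)
    (f : V → V → ℝ) : ℝ≥0∞ :=
  (∑' e : {e : V × V // G.Adj e.1 e.2},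
      ENNReal.ofReal (f e.1.1 e.1.2 ^ 2 * r s(e.1.1, e.1.2))) / 2

/-- Kirchhoff's cycle law: around every (finite) cycle the potential
differences `f(x,y) · r(xy)` sum to zero. -/
def CycleLaw {V : Type} (G : SimpleGraph V) (r : Sym2 V → ℝ) (f : V → V → ℝ) : Prop :=
  ∀ (v : V) (c : G.Walk v v), c.IsCycle →
    (c.darts.map (fun d => f d.toProd.1 d.toProd.2 * r d.edge)).sum = 0

/-- `f` is cut-respecting: for every set `X` of vertices containing both `p` and `q`
such that only finitely many edges join `X` to its complement, the net flow
across the cut is zero. -/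
def CutRespecting {V : Type} (G : SimpleGraph V) (p q : V) (f : V → V → ℝ) : Prop :=
  ∀ X : Set V, p ∈ X → q ∈ X →
    ∀ hX : {e : V × V | e.1 ∈ X ∧ e.2 ∉ X ∧ G.Adj e.1 e.2}.Finite,
      ∑ e ∈ hX.toFinset, f e.1 e.2 = 0

section Aux

variable {V : Type} {G : SimpleGraph V}

private lemma node_sum [G.LocallyFinite]
    {p q : V} {I : ℝ} {f : V → V → ℝ} (hf : IsFlow G p q I f) (x : V) :
    ∑ y ∈ G.neighborFinset x, f x y = (if x = p then I else if x = q then -I else 0) := by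
  classical
  have h1 := hf.2.2 x
  have h2 := hasSum_fintype (fun y : G.neighborSet x => f x (y : V))
  rw [← h2.unique h1, ← Finset.sum_coe_sort (G.neighborFinset x) (fun y => f x y)]
  exact Fintype.sum_equiv
    (Equiv.subtypeEquivRight (fun y => by simp [SimpleGraph.mem_neighborFinset,
      SimpleGraph.mem_neighborSet])) _ _ (fun y => rfl)

private lemma flow_sum [G.LocallyFinite]
    {p q : V} {I : ℝ} {f : V → V → ℝ} (hf : IsFlow G p q I f)
    (S : Finset V) (B : Finset (V × V))
    (hB : ∀ e : V × V, e ∈ B ↔ (e.1 ∈ S ∧ e.2 ∉ S ∧ G.Adj e.1 e.2)) :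
    ∑ e ∈ B, f e.1 e.2 = ∑ x ∈ S, (if x = p then I else if x = q then -I else 0) := by
  classical
  have hstep : ∑ x ∈ S, (if x = p then I else if x = q then -I else 0)
      = ∑ a ∈ (S.sigma fun x => G.neighborFinset x), f a.1 a.2 := by
    rw [Finset.sum_sigma]
    exact Finset.sum_congr rfl fun x _ => (node_sum hf x).symm
  set T := S.sigma fun x => G.neighborFinset x with hT
  have hsplit := Finset.sum_filter_add_sum_filter_not T (fun a => a.2 ∈ S)
      (fun a => f a.1 a.2)
  have h0 : ∑ a ∈ T.filter (fun a => a.2 ∈ S), f a.1 a.2 = 0 := by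
    refine Finset.sum_involution (fun a _ => ⟨a.2, a.1⟩) ?_ ?_ ?_ ?_
    · intro a _
      rw [hf.1 a.1 a.2]; ring
    · intro a ha _
      simp only [Finset.mem_filter, hT, Finset.mem_sigma,
        SimpleGraph.mem_neighborFinset] at ha
      intro hcontra
      have h1 : a.2 = a.1 := congrArg Sigma.fst hcontra
      exact G.irrefl (h1 ▸ ha.1.2)
    · intro a ha
      simp only [Finset.mem_filter, hT, Finset.mem_sigma,
        SimpleGraph.mem_neighborFinset] at ha ⊢
      exact ⟨⟨ha.2, ha.1.2.symm⟩, ha.1.1⟩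
    · intro a _; rfl
  have h1 : ∑ a ∈ T.filter (fun a => ¬ a.2 ∈ S), f a.1 a.2 = ∑ e ∈ B, f e.1 e.2 := by
    refine Finset.sum_bij' (fun a _ => (a.1, a.2)) (fun e _ => ⟨e.1, e.2⟩) ?_ ?_ ?_ ?_ ?_
    · intro a ha
      simp only [Finset.mem_filter, hT, Finset.mem_sigma,
        SimpleGraph.mem_neighborFinset] at ha
      exact (hB _).mpr ⟨ha.1.1, ha.2, ha.1.2⟩
    · intro e he
      obtain ⟨h1, h2, h3⟩ := (hB e).mp he
      simp only [Finset.mem_filter, hT, Finset.mem_sigma,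
        SimpleGraph.mem_neighborFinset]
      exact ⟨⟨h1, h3⟩, h2⟩
    · intro a _; rfl
    · intro e _; rfl
    · intro a _; rfl
  rw [hstep, ← hsplit, h0, h1, zero_add]

private lemma walk_const {X : Set V} {K : Set V}
    (hK : ∀ x y : V, G.Adj x y → x ∉ K → y ∉ K → (x ∈ X ↔ y ∈ X)) :
    ∀ {a b : ↑Kᶜ} (_ : (G.induce Kᶜ).Walk a b), ((a : V) ∈ X ↔ (b : V) ∈ X) := by
  intro a b w
  induction w with
  | nil => exact Iff.rfl
  | @cons u v w h p ih => exact (hK u.1 v.1 h u.2 v.2).trans ih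

private lemma comp_dichotomy {X : Set V} {K : Finset V}
    (hK : ∀ x y : V, G.Adj x y → x ∉ (K : Set V) → y ∉ (K : Set V) → (x ∈ X ↔ y ∈ X))
    (C : G.ComponentCompl (K : Set V)) :
    C.supp ⊆ X ∨ C.supp ⊆ Xᶜ := by
  classical
  obtain ⟨v, hv, rfl⟩ := C.exists_eq_mk
  have main : ∀ d, d ∈ (G.componentComplMk hv).supp → (d ∈ X ↔ v ∈ X) := by
    intro d hd
    obtain ⟨hd', hmk⟩ := hd
    have hreach : (G.induce ((K : Set V))ᶜ).Reachable ⟨d, hd'⟩ ⟨v, hv⟩ :=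
      (SimpleGraph.ConnectedComponent.eq).mp hmk
    exact hreach.elim fun w => walk_const hK w
  by_cases hvX : v ∈ X
  · exact Or.inl fun d hd => (main d hd).mpr hvX
  · exact Or.inr fun d hd => fun hdX => hvX ((main d hd).mp hdX)

open CategoryTheory in
private lemma exists_end_eval [G.LocallyFinite] [Fact G.Preconnected] [Infinite V]
    (K : Finset V) (C : G.ComponentCompl (K : Set V)) (hC : C.supp.Infinite) :
    ∃ s, s ∈ G.end ∧ s (Opposite.op K) = C := by
  classical
  set F := G.componentComplFunctor with hF
  have hML : F.IsMittagLeffler :=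
    F.isMittagLeffler_of_exists_finite_range (fun j => ⟨j, 𝟙 j, Set.toFinite _⟩)
  have hCm : C ∈ F.eventualRange (Opposite.op K) :=
    (G.infinite_iff_in_eventualRange C).mp hC
  haveI : ∀ j, Nonempty (F.toEventualRanges.obj j) := fun j => F.toEventualRanges_nonempty hML j
  obtain ⟨s, hs⟩ := F.toEventualRanges.eval_section_surjective_of_surjective
    (F.surjective_toEventualRanges hML) (Opposite.op K) ⟨C, hCm⟩
  refine ⟨(F.toEventualRangesSectionsEquiv s).val, (F.toEventualRangesSectionsEquiv s).prop, ?_⟩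
  exact congrArg Subtype.val hs

private lemma infinite_unique [G.LocallyFinite] [Fact G.Preconnected]
    (hend : ∃! e, e ∈ G.end) (K : Finset V)
    {C D : G.ComponentCompl (K : Set V)} (hC : C.supp.Infinite) (hD : D.supp.Infinite) :
    C = D := by
  haveI : Infinite V := by
    have := hC.to_subtype
    exact Infinite.of_injective (Subtype.val : C.supp → V) Subtype.val_injective
  obtain ⟨sC, hsC, hsCK⟩ := exists_end_eval K C hC
  obtain ⟨sD, hsD, hsDK⟩ := exists_end_eval K D hD
  obtain ⟨e, -, huniq⟩ := hend
  rw [← hsCK, ← hsDK, huniq _ hsC, huniq _ hsD]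

end Aux

/-- In a countable connected locally finite graph with exactly one end, every
flow is cut-respecting. -/
theorem cutRespecting_of_one_end
    {V : Type} [Countable V] (G : SimpleGraph V) (hconn : G.Connected)
    (hlf : ∀ v : V, (G.neighborSet v).Finite)
    (hend : ∃! e, e ∈ G.end)
    (r : Sym2 V → ℝ) (hr : ∀ e ∈ G.edgeSet, 0 < r e)
    (p q : V) (hpq : p ≠ q) (I : ℝ)
    (f : V → V → ℝ) (hf : IsFlow G p q I f) :
    CutRespecting G p q f := by
  classical
  haveI : G.LocallyFinite := fun v => (hlf v).fintype
  haveI : Fact G.Preconnected := ⟨hconn.preconnected⟩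
  intro X hp hq hX
  set K : Finset V := hX.toFinset.biUnion (fun e => {e.1, e.2}) with hKdef
  have hmemK : ∀ z : V, ∀ e : V × V, (e.1 ∈ X ∧ e.2 ∉ X ∧ G.Adj e.1 e.2) →
      (z = e.1 ∨ z = e.2) → z ∈ (K : Set V) := by
    intro z e he hz
    simp only [hKdef, Finset.coe_biUnion, Set.mem_iUnion, Finset.coe_insert,
      Set.Finite.mem_toFinset, Finset.mem_coe, Set.mem_insert_iff, Finset.coe_singleton,
      Set.mem_singleton_iff]
    exact ⟨e, he, hz⟩
  have hKprop : ∀ x y : V, G.Adj x y → x ∉ (K : Set V) → y ∉ (K : Set V) →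
      (x ∈ X ↔ y ∈ X) := by
    intro x y hadj hx hy
    constructor
    · intro hxX
      by_contra hyX
      exact hx (hmemK x (x, y) ⟨hxX, hyX, hadj⟩ (Or.inl rfl))
    · intro hyX
      by_contra hxX
      exact hy (hmemK y (y, x) ⟨hyX, hxX, hadj.symm⟩ (Or.inl rfl))
  -- dichotomy: X or Xᶜ finite
  have hfin : X.Finite ∨ Xᶜ.Finite := by
    by_cases hinf : ∃ C : G.ComponentCompl (K : Set V), C.supp.Infinite
    · obtain ⟨Ci, hCi⟩ := hinf
      have huniq : ∀ C : G.ComponentCompl (K : Set V), C.supp.Infinite → C = Ci :=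
        fun C hC => infinite_unique hend K hC hCi
      rcases comp_dichotomy hKprop Ci with hCX | hCXc
      · right
        have hsub : Xᶜ ⊆ (K : Set V) ∪
            ⋃ C ∈ {C : G.ComponentCompl (K : Set V) | C ≠ Ci}, C.supp := by
          intro x hx
          by_cases hxK : x ∈ (K : Set V)
          · exact Or.inl hxK
          · refine Or.inr (Set.mem_biUnion ?_ (G.componentComplMk_mem hxK))
            rintro rfl
            exact hx (hCX (G.componentComplMk_mem hxK))
        exact ((K.finite_toSet).union (Set.Finite.biUnion (Set.toFinite _)
          (fun C (hC : C ≠ Ci) => Set.not_infinite.mp (fun h => hC (huniq C h))))).subset hsub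
      · left
        have hsub : X ⊆ (K : Set V) ∪
            ⋃ C ∈ {C : G.ComponentCompl (K : Set V) | C ≠ Ci}, C.supp := by
          intro x hx
          by_cases hxK : x ∈ (K : Set V)
          · exact Or.inl hxK
          · refine Or.inr (Set.mem_biUnion ?_ (G.componentComplMk_mem hxK))
            rintro rfl
            exact (hCXc (G.componentComplMk_mem hxK)) hx
        exact ((K.finite_toSet).union (Set.Finite.biUnion (Set.toFinite _)
          (fun C (hC : C ≠ Ci) => Set.not_infinite.mp (fun h => hC (huniq C h))))).subset hsub
    · push_neg at hinf
      left
      have hsub : X ⊆ (K : Set V) ∪ ⋃ C : G.ComponentCompl (K : Set V), C.supp := by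
        intro x hx
        by_cases hxK : x ∈ (K : Set V)
        · exact Or.inl hxK
        · exact Or.inr (Set.mem_iUnion.mpr ⟨_, G.componentComplMk_mem hxK⟩)
      exact ((K.finite_toSet).union (Set.finite_iUnion
        (fun C => hinf C))).subset hsub
  rcases hfin with hXf | hXcf
  · -- X finite : sum node law over X
    have hmain := flow_sum hf hXf.toFinset hX.toFinset (by
      intro e
      simp only [Set.Finite.mem_toFinset, Set.mem_setOf_eq])
    rw [hmain]
    have hsubset : ({p, q} : Finset V) ⊆ hXf.toFinset := by
      intro x hx
      rcases Finset.mem_insert.mp hx with rfl | hx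
      · exact hXf.mem_toFinset.mpr hp
      · rw [Finset.mem_singleton] at hx
        subst hx
        exact hXf.mem_toFinset.mpr hq
    rw [← Finset.sum_subset hsubset (by
      intro x _ hx
      simp only [Finset.mem_insert, Finset.mem_singleton, not_or] at hx
      rw [if_neg hx.1, if_neg hx.2])]
    rw [Finset.sum_pair hpq]
    simp [hpq, hpq.symm]
  · -- Xᶜ finite : sum node law over Xᶜ
    set B' : Finset (V × V) := hX.toFinset.image Prod.swap with hB'def
    have hB' : ∀ e : V × V, e ∈ B' ↔
        (e.1 ∈ hXcf.toFinset ∧ e.2 ∉ hXcf.toFinset ∧ G.Adj e.1 e.2) := by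
      intro e
      simp only [hB'def, Finset.mem_image, Set.Finite.mem_toFinset, Set.mem_setOf_eq,
        Set.mem_compl_iff, not_not]
      constructor
      · rintro ⟨a, ⟨h1, h2, h3⟩, rfl⟩
        exact ⟨h2, h1, h3.symm⟩
      · rintro ⟨h1, h2, h3⟩
        exact ⟨(e.2, e.1), ⟨h2, h1, h3.symm⟩, rfl⟩
    have h0 := flow_sum hf hXcf.toFinset B' hB'
    have hrhs : ∑ x ∈ hXcf.toFinset, (if x = p then I else if x = q then -I else 0) = 0 := by
      refine Finset.sum_eq_zero fun x hx => ?_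
      have hxc : x ∈ Xᶜ := hXcf.mem_toFinset.mp hx
      rw [if_neg (fun h : x = p => hxc (by rw [h]; exact hp)), if_neg (fun h : x = q => hxc (by rw [h]; exact hq))]
    have himg : ∑ e ∈ B', f e.1 e.2 = ∑ e ∈ hX.toFinset, f e.2 e.1 := by
      rw [hB'def]
      exact Finset.sum_image (fun a _ b _ h => Prod.swap_injective h)
    have hneg : ∑ e ∈ hX.toFinset, f e.2 e.1 = - ∑ e ∈ hX.toFinset, f e.1 e.2 := by
      rw [← Finset.sum_neg_distrib]
      exact Finset.sum_congr rfl fun e _ => (hf.1 e.2 e.1).trans rfl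
    rw [h0, hrhs] at himg
    linarith [himg, hneg]
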